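/- Let D be the incidence matrix of a connected undirected graph G on n vertices, and let 0 = λ₁ < λ₂ ≤ … ≤ λ_n be the eigenvalues of the unnormalized Laplacian L = DᵀD. Then the inverse scaling factor satisfies ρ ≤ √2 / λ₂. -/

import Mathlib

open MeasureTheory ProbabilityTheory Finset Matrix

noncomputable section
namespace OneBit

/-- `D` is the edge–vertex incidence matrix of the undirected graph `G`:
rows indexed by edges `e = (i,j)` with `i < j`, carrying `1` at `min(i,j)` and `-1` at `max(i,j)`. -/
def IsIncidenceMatrix {n m : ℕ} (G : SimpleGraph (Fin n)) (D : Matrix (Fin m) (Fin n) ℝ) : Prop :=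
  ∃ ends : Fin m → Fin n × Fin n,
    Function.Injective ends ∧
    (∀ e, (ends e).1 < (ends e).2 ∧ G.Adj (ends e).1 (ends e).2) ∧
    (∀ i j : Fin n, i < j → G.Adj i j → ∃ e, ends e = (i, j)) ∧
    (∀ e k, D e k = if k = (ends e).1 then 1 else if k = (ends e).2 then -1 else 0)

/-- `Dd` is the Moore–Penrose pseudoinverse of `D`. -/
def IsMoorePenrose {n m : ℕ} (D : Matrix (Fin m) (Fin n) ℝ) (Dd : Matrix (Fin n) (Fin m) ℝ) : Prop :=
  D * Dd * D = D ∧ Dd * D * Dd = Dd ∧ (D * Dd)ᵀ = D * Dd ∧ (Dd * D)ᵀ = Dd * D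

/-- Inverse scaling factor `ρ = max_j ‖s_j‖₂`, the columns `s_j` of `D†`. -/
def rho {n m : ℕ} (Dd : Matrix (Fin n) (Fin m) ℝ) : ℝ :=
  ⨆ j : Fin m, Real.sqrt (∑ i, (Dd i j) ^ 2)

/-- Euclidean norm on `ℝⁿ`. -/
def l2 {n : ℕ} (p : Fin n → ℝ) : ℝ := Real.sqrt (∑ i, (p i) ^ 2)

/-- `‖(Dp)_T‖₁`, the ℓ₁ norm of `Dp` restricted to the coordinates in `T`. -/
def tvOn {n m : ℕ} (D : Matrix (Fin m) (Fin n) ℝ) (T : Finset (Fin m)) (p : Fin n → ℝ) : ℝ :=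
  ∑ e ∈ T, |D.mulVec p e|

/-- Compatibility factor `κ_T = inf_{p ∈ [0,1]^n, (Dp)_T ≠ 0} √|T| ‖p‖₂ / ‖(Dp)_T‖₁`. -/
def compat {n m : ℕ} (D : Matrix (Fin m) (Fin n) ℝ) (T : Finset (Fin m)) : ℝ :=
  sInf {x : ℝ | ∃ p : Fin n → ℝ, (∀ i, p i ∈ Set.Icc (0:ℝ) 1) ∧ tvOn D T p ≠ 0 ∧
    x = Real.sqrt T.card * l2 p / tvOn D T p}

/-- `‖p‖₀`, the number of nonzero coordinates. -/
def supp0 {n : ℕ} (p : Fin n → ℝ) : ℕ := Nat.card {i // p i ≠ 0}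

lemma quad_lb {n : ℕ} (A : Matrix (Fin n) (Fin n) ℝ) (hA : A.IsHermitian) (lam2 : ℝ)
    (hS : ∀ (x : ℝ) (v : Fin n → ℝ), v ≠ 0 → A.mulVec v = x • v → x = 0 ∨ lam2 ≤ x)
    (v : Fin n → ℝ) (hv : ∀ u : Fin n → ℝ, A.mulVec u = 0 → v ⬝ᵥ u = 0) :
    lam2 * (v ⬝ᵥ v) ≤ v ⬝ᵥ A.mulVec v := by
  classical
  set B := hA.eigenvectorBasis with hB
  set μ := hA.eigenvalues with hμ
  set b : Fin n → Fin n → ℝ := fun i => ⇑(B i) with hb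
  set c : Fin n → ℝ := fun i => v ⬝ᵥ b i with hc
  have hinner : ∀ x y : EuclideanSpace ℝ (Fin n), (inner ℝ x y : ℝ) = (⇑x : Fin n → ℝ) ⬝ᵥ ⇑y := by
    intro x y
    simp [PiLp.inner_apply, dotProduct, mul_comm]
  have horth : ∀ i j, b i ⬝ᵥ b j = if i = j then 1 else 0 := by
    intro i j
    have := orthonormal_iff_ite.mp B.orthonormal i j
    rw [hinner] at this
    simpa [hb] using this
  have hrepr : v = ∑ i, c i • b i := by
    have h := B.sum_repr' ((WithLp.equiv 2 (Fin n → ℝ)).symm v)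
    have h2 : ∀ i, (inner ℝ (B i) ((WithLp.equiv 2 (Fin n → ℝ)).symm v) : ℝ) = c i := by
      intro i
      rw [hinner]
      simp only [hc, hb]
      rw [dotProduct_comm]
      rfl
    calc v = ⇑(∑ i, (inner ℝ (B i) ((WithLp.equiv 2 (Fin n → ℝ)).symm v) : ℝ) • B i) := by
            rw [h]; rfl
      _ = ∑ i, c i • b i := by
            simp only [h2]; simp [hb, WithLp.ofLp_sum, WithLp.ofLp_smul]
  have heig : ∀ i, A.mulVec (b i) = μ i • b i := fun i => hA.mulVec_eigenvectorBasis i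
  have hAv : A.mulVec v = ∑ i, (c i * μ i) • b i := by
    conv_lhs => rw [hrepr]
    rw [show A.mulVec (∑ i, c i • b i) = ∑ i, c i • A.mulVec (b i) by
      simp only [Matrix.mulVec_sum, Matrix.mulVec_smul]]
    refine Finset.sum_congr rfl fun i _ => ?_
    rw [heig i, smul_smul, mul_comm]
  have hsumr : ∀ (f : Fin n → Fin n → ℝ) (w : Fin n → ℝ),
      w ⬝ᵥ (∑ i, f i) = ∑ i, w ⬝ᵥ f i := by
    intro f w
    simp only [dotProduct, Finset.sum_apply, Finset.mul_sum]
    exact Finset.sum_comm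
  have hsuml : ∀ (f : Fin n → Fin n → ℝ) (w : Fin n → ℝ),
      (∑ i, f i) ⬝ᵥ w = ∑ i, f i ⬝ᵥ w := by
    intro f w
    simp only [dotProduct, Finset.sum_apply, Finset.sum_mul]
    exact Finset.sum_comm
  have hkey : ∀ i, (∑ j, c j • b j) ⬝ᵥ b i = c i := by
    intro i
    rw [hsuml]
    simp [smul_dotProduct, horth]
  have hvv : v ⬝ᵥ v = ∑ i, c i ^ 2 := by
    conv_lhs => rw [hrepr]
    rw [hsumr]
    refine Finset.sum_congr rfl fun i _ => ?_
    rw [dotProduct_smul, smul_eq_mul, hkey i, sq]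
  have hquad : v ⬝ᵥ A.mulVec v = ∑ i, μ i * c i ^ 2 := by
    rw [hAv]
    conv_lhs => rw [hrepr]
    rw [hsumr]
    refine Finset.sum_congr rfl fun i _ => ?_
    rw [dotProduct_smul, smul_eq_mul, hkey i]
    ring
  rw [hvv, hquad, Finset.mul_sum]
  refine Finset.sum_le_sum fun i _ => ?_
  rcases hS (μ i) (b i) (by
      have := B.orthonormal.ne_zero i
      intro h0
      apply this
      ext k
      exact congrFun h0 k) (heig i) with h0 | hge
  · have : c i = 0 := by
      have := hv (b i) (by rw [heig i, h0, zero_smul])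
      simpa [hc] using this
    simp [this, h0]
  · have : 0 ≤ c i ^ 2 := sq_nonneg _
    nlinarith

/-- Proposition 1 (second part): if `λ₂ > 0` is the second smallest eigenvalue of the
unnormalized Laplacian `L = DᵀD` of a connected graph (i.e. `λ₂` is an eigenvalue of `L` and
every eigenvalue of `L` is either `0` or at least `λ₂`), then `ρ ≤ √2 / λ₂`. -/
theorem inverse_scaling_factor_le
    {n m : ℕ} (G : SimpleGraph (Fin n))
    (D : Matrix (Fin m) (Fin n) ℝ) (Dd : Matrix (Fin n) (Fin m) ℝ)
    (hD : IsIncidenceMatrix G D) (hG : G.Connected) (hDd : IsMoorePenrose D Dd)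
    (lam2 : ℝ) (hlam2pos : 0 < lam2)
    (hEig : ∃ v : Fin n → ℝ, v ≠ 0 ∧ (Dᵀ * D).mulVec v = lam2 • v)
    (hSecond : ∀ (x : ℝ) (v : Fin n → ℝ), v ≠ 0 → (Dᵀ * D).mulVec v = x • v →
      x = 0 ∨ lam2 ≤ x) :
    rho Dd ≤ Real.sqrt 2 / lam2 := by
  classical
  obtain ⟨h1, h2, h3, h4⟩ := hDd
  obtain ⟨ends, hinj, hlt, hsurj, hval⟩ := hD
  have hrhs0 : (0:ℝ) ≤ Real.sqrt 2 / lam2 :=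
    div_nonneg (Real.sqrt_nonneg 2) hlam2pos.le
  have hA : (Dᵀ * D).IsHermitian := by
    unfold Matrix.IsHermitian
    ext i k
    simp [Matrix.conjTranspose, Matrix.transpose_mul, Matrix.mul_apply, mul_comm]
  -- matrix identity : Dᵀ * D * Dd = Dᵀ
  have hmid : Dᵀ * D * Dd = Dᵀ := by
    calc Dᵀ * D * Dd = Dᵀ * (D * Dd) := by rw [Matrix.mul_assoc]
      _ = Dᵀ * (D * Dd)ᵀ := by rw [h3]
      _ = Dᵀ * (Ddᵀ * Dᵀ) := by rw [Matrix.transpose_mul]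
      _ = (D * Dd * D)ᵀ := by rw [Matrix.transpose_mul, Matrix.transpose_mul]
      _ = Dᵀ := by rw [h1]
  rcases isEmpty_or_nonempty (Fin m) with hm | hm
  · simp [rho, Real.iSup_of_isEmpty, hrhs0]
  refine ciSup_le fun j => ?_
  -- column s and row w
  set s : Fin n → ℝ := fun i => Dd i j with hs
  set w : Fin n → ℝ := fun i => D j i with hw
  have hsingle : ∀ (k : ℕ) (M : Matrix (Fin k) (Fin m) ℝ),
      M *ᵥ (Pi.single j 1) = fun i => M i j := by
    intro k M
    ext i
    simp [Matrix.mulVec, dotProduct, Pi.single_apply, mul_ite]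
  have hsmv : s = Dd *ᵥ (Pi.single j 1) := by rw [hsingle]
  have hwmv : w = Dᵀ *ᵥ (Pi.single j 1) := by
    rw [hsingle]; ext i; simp [hw, Matrix.transpose_apply]
  -- L s = w
  have hLs : (Dᵀ * D) *ᵥ s = w := by
    rw [hsmv, Matrix.mulVec_mulVec, hmid, hwmv]
  -- orthogonality to kernel
  have hker : ∀ u : Fin n → ℝ, (Dᵀ * D) *ᵥ u = 0 → s ⬝ᵥ u = 0 := by
    intro u hu
    have hDu : D *ᵥ u = 0 := by
      have hq : (D *ᵥ u) ⬝ᵥ (D *ᵥ u) = ((Dᵀ * D) *ᵥ u) ⬝ᵥ u := by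
        rw [Matrix.dotProduct_mulVec, ← Matrix.mulVec_transpose, Matrix.mulVec_mulVec]
      rw [hu, zero_dotProduct] at hq
      have : ∀ e, (D *ᵥ u) e = 0 := by
        intro e
        have hsum : ∑ e, ((D *ᵥ u) e) * ((D *ᵥ u) e) = 0 := hq
        have := (Finset.sum_eq_zero_iff_of_nonneg (fun e _ => mul_self_nonneg ((D *ᵥ u) e))).mp
          hsum e (Finset.mem_univ e)
        exact mul_self_eq_zero.mp this
      ext e; exact this e
    have hfix : (Dd * D) *ᵥ s = s := by
      rw [hsmv, Matrix.mulVec_mulVec, h2]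
    calc s ⬝ᵥ u = ((Dd * D) *ᵥ s) ⬝ᵥ u := by rw [hfix]
      _ = ((Dd * D)ᵀ *ᵥ u) ⬝ᵥ s := by
          rw [dotProduct_comm, Matrix.dotProduct_mulVec, ← Matrix.mulVec_transpose]
      _ = (Dd *ᵥ (D *ᵥ u)) ⬝ᵥ s := by rw [h4, ← Matrix.mulVec_mulVec]
      _ = 0 := by rw [hDu, Matrix.mulVec_zero, zero_dotProduct]
  -- w ⬝ᵥ w = 2
  have ha_ne_b : (ends j).1 ≠ (ends j).2 := ne_of_lt (hlt j).1
  have hww : w ⬝ᵥ w = 2 := by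
    have hterm : ∀ i, w i * w i =
        (if i = (ends j).1 then (1:ℝ) else 0) + (if i = (ends j).2 then 1 else 0) := by
      intro i
      simp only [hw, hval j i]
      by_cases h1' : i = (ends j).1
      · subst h1'; simp [ha_ne_b]
      · by_cases h2' : i = (ends j).2
        · simp [h1', h2', Ne.symm ha_ne_b]
        · simp [h1', h2']
    calc w ⬝ᵥ w = ∑ i, (w i * w i) := rfl
      _ = ∑ i, ((if i = (ends j).1 then (1:ℝ) else 0) + (if i = (ends j).2 then 1 else 0)) := by
          exact Finset.sum_congr rfl fun i _ => hterm i
      _ = 2 := by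
          rw [Finset.sum_add_distrib]
          simp [Finset.sum_ite_eq']
          norm_num
  -- main bound via quad_lb and Cauchy-Schwarz
  have hssnn : (0:ℝ) ≤ s ⬝ᵥ s := Finset.sum_nonneg fun i _ => mul_self_nonneg _
  have hquad := quad_lb (Dᵀ * D) hA lam2 hSecond s hker
  rw [hLs] at hquad
  have hCS : s ⬝ᵥ w ≤ Real.sqrt (s ⬝ᵥ s) * Real.sqrt 2 := by
    have h := Finset.sum_mul_sq_le_sq_mul_sq Finset.univ s w
    have hsq : (∑ i, s i * w i) ^ 2 ≤ (s ⬝ᵥ s) * (w ⬝ᵥ w) := by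
      have e1 : ∑ i, s i ^ 2 = s ⬝ᵥ s := by simp [dotProduct, sq]
      have e2 : ∑ i, w i ^ 2 = w ⬝ᵥ w := by simp [dotProduct, sq]
      rw [← e1, ← e2]; exact h
    have : s ⬝ᵥ w ≤ Real.sqrt ((s ⬝ᵥ s) * (w ⬝ᵥ w)) := by
      calc s ⬝ᵥ w ≤ |s ⬝ᵥ w| := le_abs_self _
        _ = Real.sqrt ((s ⬝ᵥ w) ^ 2) := (Real.sqrt_sq_eq_abs _).symm
        _ ≤ Real.sqrt ((s ⬝ᵥ s) * (w ⬝ᵥ w)) := Real.sqrt_le_sqrt hsq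
    rwa [Real.sqrt_mul hssnn, hww] at this
  have hss : ∑ i, (Dd i j) ^ 2 = s ⬝ᵥ s := by simp [dotProduct, hs, sq]
  rw [hss]
  set S := Real.sqrt (s ⬝ᵥ s) with hS
  have hSnn : 0 ≤ S := Real.sqrt_nonneg _
  have hSsq : s ⬝ᵥ s = S ^ 2 := (Real.sq_sqrt hssnn).symm
  have hchain : lam2 * S ^ 2 ≤ S * Real.sqrt 2 := by
    calc lam2 * S ^ 2 = lam2 * (s ⬝ᵥ s) := by rw [hSsq]
      _ ≤ s ⬝ᵥ w := hquad
      _ ≤ Real.sqrt (s ⬝ᵥ s) * Real.sqrt 2 := hCS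
      _ = S * Real.sqrt 2 := rfl
  rcases eq_or_lt_of_le hSnn with h0 | hpos
  · rw [← h0]; exact hrhs0
  · rw [le_div_iff₀ hlam2pos]
    nlinarith

end OneBit
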